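/- Entropy versus cross-entropy for biased Bernoulli vectors: let n ≥ 1, let δ_1,…,δ_n ∈ [0,1) and τ_1,…,τ_n ∈ [0,1], and let α > 0, β ∈ ℝ with 0 ≤ β ≤ α. Suppose Σ_{i=1}^n h((1+τ_i)/2) ≥ n − α (the random vector Z of independent Bernoulli((1+τ_i)/2) variables has entropy at least n − α) and Σ_{i=1}^n [ −((1+τ_i)/2)·log₂((1+δ_i)/2) − ((1−τ_i)/2)·log₂((1−δ_i)/2) ] ≤ n − β (the cross-entropy of Z relative to the vector X of independent Bernoulli((1+δ_i)/2) variables is at most n − β). Then Σ_{i=1}^n h((1+δ_i)/2) ≤ n − β²/(16α); that is, H(X) ≤ n − β²/(16α). -/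

import Mathlib

open Real Set

/-- Binary entropy function. -/
noncomputable def binEnt (p : ℝ) : ℝ :=
  -(p * Real.logb 2 p) - (1 - p) * Real.logb 2 (1 - p)

lemma aux_G_nonneg {x : ℝ} (hx0 : 0 ≤ x) (hx1 : x < 1) :
    0 ≤ Real.log (1 + x) - Real.log (1 - x) - 2 * x := by
  set G : ℝ → ℝ := fun y => Real.log (1 + y) - Real.log (1 - y) - 2 * y with hG
  have hder : ∀ y ∈ Icc (0:ℝ) x, HasDerivAt G ((1+y)⁻¹ + (1-y)⁻¹ - 2) y := by
    intro y hy
    have hy1 : (1:ℝ) + y ≠ 0 := by nlinarith [hy.1, hy.2]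
    have hy2 : (1:ℝ) - y ≠ 0 := by nlinarith [hy.2]
    have h1 : HasDerivAt (fun y : ℝ => Real.log (1 + y)) ((1+y)⁻¹) y := by
      have := (Real.hasDerivAt_log hy1).comp y ((hasDerivAt_id y).const_add 1)
      simpa [Function.comp_def] using this
    have h2 : HasDerivAt (fun y : ℝ => Real.log (1 - y)) (-(1-y)⁻¹) y := by
      have := (Real.hasDerivAt_log hy2).comp y ((hasDerivAt_id y).neg.const_add 1)
      simpa [Function.comp_def] using this
    have h3 : HasDerivAt (fun y : ℝ => 2 * y) 2 y := by
      simpa using (hasDerivAt_id y).const_mul 2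
    have := (h1.sub h2).sub h3
    exact this.congr_deriv (by ring)
  have hmono : MonotoneOn G (Icc 0 x) := by
    apply monotoneOn_of_deriv_nonneg (convex_Icc 0 x)
    · exact fun y hy => (hder y hy).continuousAt.continuousWithinAt
    · intro y hy
      rw [interior_Icc] at hy
      exact ((hder y ⟨le_of_lt hy.1, le_of_lt hy.2⟩).differentiableAt).differentiableWithinAt
    · intro y hy
      rw [interior_Icc] at hy
      rw [(hder y ⟨le_of_lt hy.1, le_of_lt hy.2⟩).deriv]
      have hy1 : (0:ℝ) < 1 + y := by linarith [hy.1]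
      have hy2 : (0:ℝ) < 1 - y := by nlinarith [hy.2]
      have e1 : 1 - y ≤ (1+y)⁻¹ := by
        rw [inv_eq_one_div, le_div_iff₀ hy1]; nlinarith [sq_nonneg y]
      have e2 : 1 + y ≤ (1-y)⁻¹ := by
        rw [inv_eq_one_div, le_div_iff₀ hy2]; nlinarith [sq_nonneg y]
      linarith
  have h0 : G 0 = 0 := by simp [hG]
  have := hmono (left_mem_Icc.2 hx0) (right_mem_Icc.2 hx0) hx0
  rw [h0] at this
  simpa [hG] using this

lemma aux_F {t : ℝ} (ht0 : 0 ≤ t) (ht1 : t ≤ 1) :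
    t ^ 2 ≤ (1 + t) * Real.log (1 + t) + (1 - t) * Real.log (1 - t) := by
  rcases eq_or_lt_of_le ht1 with rfl | ht1
  · simp only [sub_self, zero_mul, add_zero]
    have := Real.log_two_gt_d9
    norm_num
    linarith
  set F : ℝ → ℝ := fun y => (1 + y) * Real.log (1 + y) + (1 - y) * Real.log (1 - y) - y ^ 2
    with hF
  have hder : ∀ y ∈ Icc (0:ℝ) t,
      HasDerivAt F (Real.log (1 + y) - Real.log (1 - y) - 2 * y) y := by
    intro y hy
    have hy1 : (1:ℝ) + y ≠ 0 := by nlinarith [hy.1, hy.2]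
    have hy2 : (1:ℝ) - y ≠ 0 := by nlinarith [hy.2]
    have ha : HasDerivAt (fun y : ℝ => 1 + y) 1 y := by
      simpa using (hasDerivAt_id y).const_add 1
    have hb : HasDerivAt (fun y : ℝ => 1 - y) (-1) y := by
      exact (hasDerivAt_id y).const_sub 1
    have hla : HasDerivAt (fun y : ℝ => Real.log (1 + y)) ((1+y)⁻¹) y := by
      have := (Real.hasDerivAt_log hy1).comp y ha
      simpa [Function.comp_def] using this
    have hlb : HasDerivAt (fun y : ℝ => Real.log (1 - y)) (-(1-y)⁻¹) y := by
      have := (Real.hasDerivAt_log hy2).comp y hb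
      simpa [Function.comp_def] using this
    have h1 := ha.mul hla
    have h2 := hb.mul hlb
    have h3 : HasDerivAt (fun y : ℝ => y ^ 2) (2 * y) y := by
      simpa using (hasDerivAt_pow 2 y)
    have := (h1.add h2).sub h3
    exact this.congr_deriv (by rw [mul_inv_cancel₀ hy1, mul_neg, mul_inv_cancel₀ hy2]; ring)
  have hmono : MonotoneOn F (Icc 0 t) := by
    apply monotoneOn_of_deriv_nonneg (convex_Icc 0 t)
    · exact fun y hy => (hder y hy).continuousAt.continuousWithinAt
    · intro y hy
      rw [interior_Icc] at hy
      exact ((hder y ⟨le_of_lt hy.1, le_of_lt hy.2⟩).differentiableAt).differentiableWithinAt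
    · intro y hy
      rw [interior_Icc] at hy
      rw [(hder y ⟨le_of_lt hy.1, le_of_lt hy.2⟩).deriv]
      exact aux_G_nonneg (le_of_lt hy.1) (lt_trans hy.2 ht1)
  have h0 : F 0 = 0 := by simp [hF]
  have := hmono (left_mem_Icc.2 ht0) (right_mem_Icc.2 ht0) ht0
  rw [h0] at this
  simp only [hF, sub_nonneg] at this
  linarith [this]

lemma binEnt_le {t : ℝ} (ht0 : 0 ≤ t) (ht1 : t ≤ 1) :
    binEnt ((1 + t) / 2) ≤ 1 - t ^ 2 / 2 := by
  rcases eq_or_lt_of_le ht1 with rfl | ht1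
  · norm_num [binEnt]
  have h1 : (1:ℝ) + t ≠ 0 := by linarith
  have h2 : (1:ℝ) - t ≠ 0 := by linarith
  have hl2 : 0 < Real.log 2 := Real.log_pos (by norm_num)
  have expand : binEnt ((1 + t) / 2) =
      1 - ((1 + t) * Real.log (1 + t) + (1 - t) * Real.log (1 - t)) / (2 * Real.log 2) := by
    unfold binEnt Real.logb
    have e1 : (1:ℝ) - (1 + t) / 2 = (1 - t) / 2 := by ring
    rw [e1, Real.log_div h1 two_ne_zero, Real.log_div h2 two_ne_zero]
    field_simp
    ring
  rw [expand]
  have hS := aux_F ht0 (le_of_lt ht1)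
  have hlt : Real.log 2 < 1 := by
    have := Real.log_two_lt_d9; linarith
  have : t ^ 2 / 2 ≤ ((1 + t) * Real.log (1 + t) + (1 - t) * Real.log (1 - t)) / (2 * Real.log 2) := by
    rw [div_le_div_iff₀ (by norm_num) (by positivity)]
    nlinarith [sq_nonneg t]
  linarith

lemma cross_ge {d s : ℝ} (hd0 : 0 ≤ d) (hd1 : d < 1) (hs0 : 0 ≤ s) (hs1 : s ≤ 1) :
    1 - d * s / Real.log 2 ≤
      -(((1 + s) / 2) * Real.logb 2 ((1 + d) / 2)) - ((1 - s) / 2) * Real.logb 2 ((1 - d) / 2) := by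
  have h1 : (1:ℝ) + d ≠ 0 := by linarith
  have h2 : (1:ℝ) - d ≠ 0 := by linarith
  have hl2 : 0 < Real.log 2 := Real.log_pos (by norm_num)
  have expand : -(((1 + s) / 2) * Real.logb 2 ((1 + d) / 2)) -
      ((1 - s) / 2) * Real.logb 2 ((1 - d) / 2) =
      1 - ((1 + s) * Real.log (1 + d) + (1 - s) * Real.log (1 - d)) / (2 * Real.log 2) := by
    unfold Real.logb
    rw [Real.log_div h1 two_ne_zero, Real.log_div h2 two_ne_zero]
    field_simp
    ring
  rw [expand]
  have la : Real.log (1 + d) ≤ d := by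
    have := Real.log_le_sub_one_of_pos (show (0:ℝ) < 1 + d by linarith); linarith
  have lb : Real.log (1 - d) ≤ -d := by
    have := Real.log_le_sub_one_of_pos (show (0:ℝ) < 1 - d by linarith); linarith
  have hE : (1 + s) * Real.log (1 + d) + (1 - s) * Real.log (1 - d) ≤ 2 * (d * s) := by
    nlinarith [mul_le_mul_of_nonneg_left la (show (0:ℝ) ≤ 1 + s by linarith),
      mul_le_mul_of_nonneg_left lb (show (0:ℝ) ≤ 1 - s by linarith)]
  have : ((1 + s) * Real.log (1 + d) + (1 - s) * Real.log (1 - d)) / (2 * Real.log 2)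
      ≤ d * s / Real.log 2 := by
    rw [div_le_div_iff₀ (by positivity) hl2]
    nlinarith
  linarith

/-- **Entropy versus cross-entropy for biased Bernoulli vectors**: if the vector `Z` of
independent `Ber((1+τᵢ)/2)` variables has entropy at least `n − α` and its cross-entropy
relative to the vector `X` of independent `Ber((1+δᵢ)/2)` variables is at most `n − β`
with `0 ≤ β ≤ α`, then `H(X) ≤ n − β²/(16α)`. -/
theorem entropy_vs_cross_entropy
    (n : ℕ) (hn : 1 ≤ n) (δ τ : Fin n → ℝ)
    (hδ : ∀ i, δ i ∈ Set.Ico (0 : ℝ) 1) (hτ : ∀ i, τ i ∈ Set.Icc (0 : ℝ) 1)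
    (α β : ℝ) (hα : 0 < α) (hβ0 : 0 ≤ β) (hβα : β ≤ α)
    (hZ : (n : ℝ) - α ≤ ∑ i, binEnt ((1 + τ i) / 2))
    (hcross : ∑ i, (-(((1 + τ i) / 2) * Real.logb 2 ((1 + δ i) / 2)) -
        ((1 - τ i) / 2) * Real.logb 2 ((1 - δ i) / 2)) ≤ (n : ℝ) - β) :
    ∑ i, binEnt ((1 + δ i) / 2) ≤ (n : ℝ) - β ^ 2 / (16 * α) := by
  have hl2 : 0 < Real.log 2 := Real.log_pos (by norm_num)
  -- ∑ τ² ≤ 2α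
  have hτ2 : ∑ i, (τ i) ^ 2 ≤ 2 * α := by
    have h1 : ∑ i, binEnt ((1 + τ i) / 2) ≤ ∑ i, (1 - (τ i) ^ 2 / 2) :=
      Finset.sum_le_sum fun i _ => binEnt_le (hτ i).1 (hτ i).2
    have h2 : ∑ i, (1 - (τ i) ^ 2 / 2) = (n : ℝ) - (∑ i, (τ i) ^ 2) / 2 := by
      rw [Finset.sum_sub_distrib, Finset.sum_div]
      simp [Finset.sum_div]
    rw [h2] at h1
    linarith
  -- β log 2 ≤ ∑ δτ
  have hδτ : β * Real.log 2 ≤ ∑ i, δ i * τ i := by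
    have h1 : ∑ i, (1 - δ i * τ i / Real.log 2) ≤ (n : ℝ) - β := by
      refine le_trans (Finset.sum_le_sum fun i _ => ?_) hcross
      exact cross_ge (hδ i).1 (hδ i).2 (hτ i).1 (hτ i).2
    have h2 : ∑ i, (1 - δ i * τ i / Real.log 2) =
        (n : ℝ) - (∑ i, δ i * τ i) / Real.log 2 := by
      rw [Finset.sum_sub_distrib, Finset.sum_div]
      simp [Finset.sum_div]
    rw [h2] at h1
    have : β ≤ (∑ i, δ i * τ i) / Real.log 2 := by linarith
    calc β * Real.log 2 ≤ ((∑ i, δ i * τ i) / Real.log 2) * Real.log 2 := by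
          exact mul_le_mul_of_nonneg_right this (le_of_lt hl2)
      _ = ∑ i, δ i * τ i := by field_simp
  -- Cauchy-Schwarz
  have hCS : (∑ i, δ i * τ i) ^ 2 ≤ (∑ i, (δ i) ^ 2) * ∑ i, (τ i) ^ 2 :=
    Finset.sum_mul_sq_le_sq_mul_sq Finset.univ δ τ
  have hδτ0 : 0 ≤ ∑ i, δ i * τ i :=
    Finset.sum_nonneg fun i _ => mul_nonneg (hδ i).1 (hτ i).1
  have hδ20 : 0 ≤ ∑ i, (δ i) ^ 2 := Finset.sum_nonneg fun i _ => sq_nonneg _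
  have hlog_half : (1:ℝ) / 2 ≤ Real.log 2 := by
    have := Real.log_two_gt_d9; linarith
  -- β²/(8α) ≤ ∑ δ²
  have hkey : β ^ 2 / (8 * α) ≤ ∑ i, (δ i) ^ 2 := by
    rw [div_le_iff₀ (by positivity)]
    have h1 : (β * Real.log 2) ^ 2 ≤ (∑ i, δ i * τ i) ^ 2 :=
      pow_le_pow_left₀ (by positivity) hδτ 2
    have h2 : (1:ℝ)/4 ≤ Real.log 2 ^ 2 := by nlinarith
    nlinarith [sq_nonneg β, mul_le_mul_of_nonneg_left hτ2 hδ20,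
      mul_le_mul_of_nonneg_left h2 (sq_nonneg β)]
  -- conclude
  have hfin : ∑ i, binEnt ((1 + δ i) / 2) ≤ (n : ℝ) - (∑ i, (δ i) ^ 2) / 2 := by
    have h1 : ∑ i, binEnt ((1 + δ i) / 2) ≤ ∑ i, (1 - (δ i) ^ 2 / 2) :=
      Finset.sum_le_sum fun i _ => binEnt_le (hδ i).1 (le_of_lt (hδ i).2)
    have h2 : ∑ i, (1 - (δ i) ^ 2 / 2) = (n : ℝ) - (∑ i, (δ i) ^ 2) / 2 := by
      rw [Finset.sum_sub_distrib, Finset.sum_div]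
      simp [Finset.sum_div]
    linarith [h1, h2.le, h2.ge]
  have : β ^ 2 / (16 * α) ≤ (∑ i, (δ i) ^ 2) / 2 := by
    have e : β ^ 2 / (16 * α) = (β ^ 2 / (8 * α)) / 2 := by
      rw [div_div]; ring_nf
    rw [e]
    linarith
  linarith
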